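/- Every nonempty set E ∈ 𝒪((0,1]) (i.e. every nonempty countable union of half-open dyadic intervals) is locally ergodic with respect to the group Perm^dyad_E of dyadic measure-preserving permutations that are the identity on E^c, where local ergodicity is understood with respect to the dyadic refining-partition structure of ((0,1], ℬ((0,1]), λ) with λ the Lebesgue measure. -/

import Mathlib

open MeasureTheory

/-- The `k`-th dyadic interval of level `d` (1-indexed): `I_k^d = ((k-1)/2^d, k/2^d]`. -/
def dyadI (d k : ℕ) : Set ℝ := Set.Ioc (((k : ℝ) - 1) / 2 ^ d) ((k : ℝ) / 2 ^ d)

/-- `g` is a dyadic permutation of `(0,1]` (extended to `ℝ` by the identity outside `(0,1]`):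
for some `d ≥ 0` and some permutation `π` of the level-`d` dyadic intervals (indexed here by
`Fin (2^d)`, i.e. `0`-based), `g` shifts `I_{k+1}^d` onto `I_{π(k)+1}^d`. -/
def IsDyadicPerm (g : ℝ → ℝ) : Prop :=
  (∀ t ∉ Set.Ioc (0 : ℝ) 1, g t = t) ∧
  ∃ d : ℕ, ∃ π : Equiv.Perm (Fin (2 ^ d)),
    ∀ k : Fin (2 ^ d), ∀ t ∈ dyadI d ((k : ℕ) + 1),
      g t = (((π k : ℕ) : ℝ) + 1) / 2 ^ d - (((k : ℕ) + 1 : ℝ) / 2 ^ d - t)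

/-- `ℍ` is a group of maps under composition. -/
def IsMapGroup (ℍ : Set (ℝ → ℝ)) : Prop :=
  id ∈ ℍ ∧ (∀ g ∈ ℍ, ∀ h ∈ ℍ, g ∘ h ∈ ℍ) ∧
    ∀ g ∈ ℍ, ∃ g' ∈ ℍ, g ∘ g' = id ∧ g' ∘ g = id

/-- `E` is finite locally ergodic with respect to the set of maps `𝔾` of `(0,1]`, relative to
the dyadic refining-partition structure of `((0,1], ℬ((0,1]), λ)`. -/
def FiniteLocallyErgodicDyad (𝔾 : Set (ℝ → ℝ)) (E : Set ℝ) : Prop :=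
  0 < volume E ∧
  ∃ NE : ℕ, (∃ s : Finset (Fin (2 ^ NE)), E = ⋃ k ∈ s, dyadI NE ((k : ℕ) + 1)) ∧
    ∀ N, NE ≤ N → ∀ l m : Fin (2 ^ N), l ≠ m →
      dyadI N ((l : ℕ) + 1) ∪ dyadI N ((m : ℕ) + 1) ⊆ E →
      ∃ ℍ ⊆ 𝔾, IsMapGroup ℍ ∧
        (∀ g ∈ ℍ, ∀ t, t ∉ dyadI N ((l : ℕ) + 1) ∪ dyadI N ((m : ℕ) + 1) → g t = t) ∧
        ∀ B : Set ℝ, MeasurableSet B →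
          B ⊆ dyadI N ((l : ℕ) + 1) ∪ dyadI N ((m : ℕ) + 1) →
          (∀ g ∈ ℍ, g ⁻¹' B = B) →
          volume B = 0 ∨
            volume ((dyadI N ((l : ℕ) + 1) ∪ dyadI N ((m : ℕ) + 1)) \ B) = 0

/-- `E` is locally ergodic with respect to `𝔾`: `E` is the union of an increasing sequence of
finite locally ergodic sets. -/
def LocallyErgodicDyad (𝔾 : Set (ℝ → ℝ)) (E : Set ℝ) : Prop :=
  ∃ Ej : ℕ → Set ℝ, Monotone Ej ∧ (∀ j, FiniteLocallyErgodicDyad 𝔾 (Ej j)) ∧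
    (⋃ j, Ej j) = E

/-- `E ∈ 𝒪((0,1])`: `E` is a countable union of half-open dyadic intervals (or empty). -/
def IsDyadOpen (E : Set ℝ) : Prop :=
  E = ∅ ∨ ∃ u : ℕ → Set ℝ,
    (∀ j, ∃ N : ℕ, ∃ k : Fin (2 ^ N), u j = dyadI N ((k : ℕ) + 1)) ∧ E = ⋃ j, u j

open Set
open scoped ENNReal

lemma two_pow_pos (d : ℕ) : (0:ℝ) < 2 ^ d := by positivity

lemma dyadI_eq (d k : ℕ) : dyadI d (k+1) = Set.Ioc ((k:ℝ)/2^d) ((k+1:ℝ)/2^d) := by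
  simp [dyadI]

lemma mem_dyadI {d k : ℕ} {t : ℝ} :
    t ∈ dyadI d (k+1) ↔ (k:ℝ)/2^d < t ∧ t ≤ (k+1:ℝ)/2^d := by
  rw [dyadI_eq]; rfl

lemma dyadI_subset_Ioc {d : ℕ} (k : Fin (2^d)) :
    dyadI d ((k:ℕ)+1) ⊆ Set.Ioc (0:ℝ) 1 := by
  rw [dyadI_eq]
  intro t ht
  obtain ⟨h1, h2⟩ := ht
  constructor
  · exact lt_of_le_of_lt (by positivity) h1
  · refine h2.trans ?_
    rw [div_le_one (two_pow_pos d)]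
    have : (k:ℕ) + 1 ≤ 2^d := k.2
    exact_mod_cast this

lemma volume_dyadI (d k : ℕ) : volume (dyadI d (k+1)) = ENNReal.ofReal ((1:ℝ)/2^d) := by
  rw [dyadI_eq, Real.volume_Ioc]
  congr 1
  field_simp
  ring

lemma dyadI_unique {d : ℕ} {k j : ℕ} {t : ℝ} (hk : t ∈ dyadI d (k+1))
    (hj : t ∈ dyadI d (j+1)) : k = j := by
  rw [mem_dyadI] at hk hj
  by_contra h
  rcases Nat.lt_or_ge k j with h' | h'
  · have h1 : (k:ℝ)+1 ≤ (j:ℝ) := by exact_mod_cast h'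
    have : t ≤ (j:ℝ)/2^d :=
      hk.2.trans (by gcongr)
    exact absurd this (not_le.mpr hj.1)
  · have h'' : j < k := lt_of_le_of_ne h' (Ne.symm h)
    have h1 : (j:ℝ)+1 ≤ (k:ℝ) := by exact_mod_cast h''
    have : t ≤ (k:ℝ)/2^d := hj.2.trans (by gcongr)
    exact absurd this (not_le.mpr hk.1)

lemma dyadI_disjoint {d : ℕ} {k j : ℕ} (h : k ≠ j) :
    Disjoint (dyadI d (k+1)) (dyadI d (j+1)) := by
  rw [Set.disjoint_left]
  intro t hk hj
  exact h (dyadI_unique hk hj)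

lemma dyadI_subset_parent (N e j : ℕ) :
    dyadI (N+e) (j+1) ⊆ dyadI N (j / 2^e + 1) := by
  rw [dyadI_eq, dyadI_eq]
  have hpow : (2:ℝ)^(N+e) = 2^N * 2^e := pow_add 2 N e
  have h1 : ((j / 2^e : ℕ):ℝ) * 2^e ≤ j := by exact_mod_cast Nat.div_mul_le_self j (2^e)
  have h2 : (j:ℝ) + 1 ≤ (((j / 2^e : ℕ):ℝ) + 1) * 2^e := by
    have : j + 1 ≤ (j / 2^e + 1) * 2^e := by
      have h1 := Nat.div_add_mod j (2^e)
      have h2 : j % 2^e < 2^e := Nat.mod_lt _ (by positivity)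
      nlinarith [h1, h2]
    exact_mod_cast this
  apply Set.Ioc_subset_Ioc
  · rw [div_le_div_iff₀ (two_pow_pos N) (two_pow_pos (N+e)), hpow]
    nlinarith [two_pow_pos N]
  · rw [div_le_div_iff₀ (two_pow_pos (N+e)) (two_pow_pos N), hpow]
    nlinarith [two_pow_pos N]

noncomputable def dyadIdx (d : ℕ) (t : ℝ) : ℕ := (⌈t * 2^d⌉).toNat - 1

lemma dyadIdx_spec {d : ℕ} {t : ℝ} (h : t ∈ Set.Ioc (0:ℝ) 1) :
    dyadIdx d t < 2^d ∧ t ∈ dyadI d (dyadIdx d t + 1) := by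
  obtain ⟨h0, h1⟩ := h
  set c := ⌈t * 2^d⌉ with hc
  have hc1 : 1 ≤ c := by
    have : (0:ℝ) < t * 2^d := by positivity
    exact Int.ceil_pos.mpr this
  have hc2 : c ≤ 2^d := by
    rw [hc, Int.ceil_le]
    push_cast
    nlinarith [two_pow_pos d]
  have htn : (1:ℕ) ≤ c.toNat := by
    rw [Int.le_toNat (by omega)]; exact_mod_cast hc1
  have hcast : ((c.toNat - 1 : ℕ) : ℝ) = (c:ℝ) - 1 := by
    push_cast [Nat.cast_sub htn]
    congr 1
    exact_mod_cast Int.toNat_of_nonneg (by omega)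
  constructor
  · have hle : c.toNat ≤ 2^d := by
      rw [Int.toNat_le]; exact_mod_cast hc2
    show c.toNat - 1 < 2^d
    have h2d : 0 < 2^d := by positivity
    omega
  · rw [mem_dyadI]
    constructor
    · show ((c.toNat - 1:ℕ):ℝ)/2^d < t
      rw [hcast, div_lt_iff₀ (two_pow_pos d)]
      have := Int.ceil_lt_add_one (t * 2^d)
      rw [← hc] at this
      linarith
    · show t ≤ (((c.toNat - 1:ℕ):ℝ) + 1)/2^d
      rw [hcast, le_div_iff₀ (two_pow_pos d)]
      have := Int.le_ceil (t * 2^d)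
      rw [← hc] at this
      linarith

def PermSpec (d : ℕ) (π : Equiv.Perm (Fin (2^d))) (g : ℝ → ℝ) : Prop :=
  ∀ k : Fin (2^d), ∀ t ∈ dyadI d ((k:ℕ)+1), g t = t + (((π k : ℕ):ℝ) - ((k:ℕ):ℝ))/2^d

lemma permSpec_iff (d : ℕ) (π : Equiv.Perm (Fin (2^d))) (g : ℝ → ℝ) :
    (∀ k : Fin (2 ^ d), ∀ t ∈ dyadI d ((k : ℕ) + 1),
      g t = (((π k : ℕ) : ℝ) + 1) / 2 ^ d - (((k : ℕ) + 1 : ℝ) / 2 ^ d - t)) ↔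
    PermSpec d π g := by
  unfold PermSpec
  apply forall_congr'; intro k
  apply forall_congr'; intro t
  apply imp_congr_right; intro _
  constructor <;> intro h <;> rw [h] <;> ring

lemma permSpec_maps {d : ℕ} {π : Equiv.Perm (Fin (2^d))} {g : ℝ → ℝ}
    (hg : PermSpec d π g) {k : Fin (2^d)} {t : ℝ} (ht : t ∈ dyadI d ((k:ℕ)+1)) :
    g t ∈ dyadI d ((π k : ℕ)+1) := by
  have ht' := ht
  rw [mem_dyadI] at ht ⊢
  rw [hg k t ht']
  constructor
  · have e1 : ((π k : ℕ):ℝ)/2^d = ((k:ℕ):ℝ)/2^d + (((π k : ℕ):ℝ) - ((k:ℕ):ℝ))/2^d := by ring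
    rw [e1]; linarith [ht.1]
  · have e2 : (((π k : ℕ):ℝ)+1)/2^d
        = (((k:ℕ):ℝ)+1)/2^d + (((π k : ℕ):ℝ) - ((k:ℕ):ℝ))/2^d := by ring
    rw [e2]; linarith [ht.2]

def liftPerm {d : ℕ} (e : ℕ) (π : Equiv.Perm (Fin (2^d))) : Equiv.Perm (Fin (2^(d+e))) :=
  (finProdFinEquiv.trans (finCongr (pow_add 2 d e).symm)).permCongr
    (π.prodCongr (Equiv.refl (Fin (2^e))))

lemma fin_div_lt {d e : ℕ} (j : Fin (2^(d+e))) : (j:ℕ) / 2^e < 2^d := by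
  have h2e : 0 < 2^e := by positivity
  rw [Nat.div_lt_iff_lt_mul h2e]
  calc (j:ℕ) < 2^(d+e) := j.2
  _ = 2^d * 2^e := pow_add 2 d e

lemma liftPerm_apply {d e : ℕ} (π : Equiv.Perm (Fin (2^d))) (j : Fin (2^(d+e))) :
    ((liftPerm e π j : ℕ)) = (j:ℕ) % 2^e + 2^e * (π ⟨(j:ℕ) / 2^e, fin_div_lt j⟩ : ℕ) := rfl

lemma permSpec_lift {d e : ℕ} {π : Equiv.Perm (Fin (2^d))} {g : ℝ → ℝ}
    (hg : PermSpec d π g) : PermSpec (d+e) (liftPerm e π) g := by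
  intro j t ht
  set q : Fin (2^d) := ⟨(j:ℕ) / 2^e, fin_div_lt j⟩ with hq
  have htq : t ∈ dyadI d ((q:ℕ)+1) := dyadI_subset_parent d e (j:ℕ) ht
  rw [hg q t htq]
  have hj : ((j:ℕ):ℝ) = 2^e * ((q:ℕ):ℝ) + (((j:ℕ) % 2^e : ℕ):ℝ) := by
    have h := congrArg (Nat.cast : ℕ → ℝ) (Nat.div_add_mod (j:ℕ) (2^e))
    push_cast at h
    rw [← h]
  have hl : ((liftPerm e π j : ℕ):ℝ) = (((j:ℕ) % 2^e : ℕ):ℝ) + 2^e * ((π q : ℕ):ℝ) := by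
    exact_mod_cast congrArg (Nat.cast : ℕ → ℝ) (liftPerm_apply π j)
  have h2e : (2:ℝ)^e ≠ 0 := ne_of_gt (two_pow_pos e)
  have key : ((liftPerm e π j : ℕ):ℝ) - ((j:ℕ):ℝ)
      = (((π q : ℕ):ℝ) - ((q:ℕ):ℝ)) * 2^e := by
    rw [hl, hj]; ring
  rw [key, pow_add, mul_div_mul_right _ _ h2e]

lemma permSpec_mono {d d' : ℕ} {π : Equiv.Perm (Fin (2^d))} {g : ℝ → ℝ}
    (hg : PermSpec d π g) (h : d ≤ d') : ∃ π' : Equiv.Perm (Fin (2^d')), PermSpec d' π' g := by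
  obtain ⟨e, rfl⟩ := Nat.exists_eq_add_of_le h
  exact ⟨liftPerm e π, permSpec_lift hg⟩

lemma permSpec_comp {d : ℕ} {π₁ π₂ : Equiv.Perm (Fin (2^d))} {g h : ℝ → ℝ}
    (hg : PermSpec d π₁ g) (hh : PermSpec d π₂ h) : PermSpec d (π₁ * π₂) (g ∘ h) := by
  intro k t ht
  have h1 : h t ∈ dyadI d ((π₂ k : ℕ)+1) := permSpec_maps hh ht
  show g (h t) = _
  rw [hg (π₂ k) (h t) h1, hh k t ht, Equiv.Perm.mul_apply]
  ring

noncomputable def dyadInv (d : ℕ) (π : Equiv.Perm (Fin (2^d))) : ℝ → ℝ :=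
  fun t => if h : t ∈ Set.Ioc (0:ℝ) 1 then
    t + (((π.symm ⟨dyadIdx d t, (dyadIdx_spec h).1⟩ : ℕ):ℝ) - ((dyadIdx d t : ℕ):ℝ))/2^d else t

lemma dyadIdx_eq {d : ℕ} {k : Fin (2^d)} {t : ℝ} (ht : t ∈ dyadI d ((k:ℕ)+1)) :
    dyadIdx d t = (k:ℕ) :=
  dyadI_unique (dyadIdx_spec (dyadI_subset_Ioc k ht)).2 ht

lemma dyadInv_spec (d : ℕ) (π : Equiv.Perm (Fin (2^d))) : PermSpec d π.symm (dyadInv d π) := by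
  intro k t ht
  have h01 : t ∈ Set.Ioc (0:ℝ) 1 := dyadI_subset_Ioc k ht
  have hidx : dyadIdx d t = (k:ℕ) := dyadIdx_eq ht
  have hfin : (⟨dyadIdx d t, (dyadIdx_spec h01).1⟩ : Fin (2^d)) = k := Fin.ext hidx
  unfold dyadInv
  rw [dif_pos h01, hfin, hidx]

lemma dyadInv_outside (d : ℕ) (π : Equiv.Perm (Fin (2^d))) {t : ℝ}
    (h : t ∉ Set.Ioc (0:ℝ) 1) : dyadInv d π t = t := dif_neg h

/-- the subgroup of dyadic permutations fixing `Aᶜ`. -/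

def HH (A : Set ℝ) : Set (ℝ → ℝ) := {g | IsDyadicPerm g ∧ ∀ t ∉ A, g t = t}

lemma HH_group (A : Set ℝ) : IsMapGroup (HH A) := by
  refine ⟨⟨⟨fun t _ => rfl, 0, 1, ?_⟩, fun t _ => rfl⟩, ?_, ?_⟩
  · rw [permSpec_iff]
    intro k t _
    simp
  · -- composition
    rintro g ⟨⟨hg0, d₁, π₁, hg1⟩, hgA⟩ h ⟨⟨hh0, d₂, π₂, hh1⟩, hhA⟩
    rw [permSpec_iff] at hg1 hh1
    obtain ⟨π₁', hg'⟩ := permSpec_mono hg1 (le_max_left d₁ d₂)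
    obtain ⟨π₂', hh'⟩ := permSpec_mono hh1 (le_max_right d₁ d₂)
    refine ⟨⟨fun t ht => ?_, max d₁ d₂, π₁' * π₂', (permSpec_iff _ _ _).mpr
      (permSpec_comp hg' hh')⟩, fun t ht => ?_⟩
    · show g (h t) = t
      rw [hh0 t ht, hg0 t ht]
    · show g (h t) = t
      rw [hhA t ht, hgA t ht]
  · -- inverse
    rintro g ⟨⟨hg0, d, π, hg1⟩, hgA⟩
    rw [permSpec_iff] at hg1
    refine ⟨dyadInv d π, ⟨⟨fun t ht => dyadInv_outside d π ht, d, π.symm,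
      (permSpec_iff _ _ _).mpr (dyadInv_spec d π)⟩, ?_⟩, ?_, ?_⟩
    · -- fixes Aᶜ
      intro t htA
      by_cases h01 : t ∈ Set.Ioc (0:ℝ) 1
      · set k : Fin (2^d) := ⟨dyadIdx d t, (dyadIdx_spec h01).1⟩ with hk
        have htk : t ∈ dyadI d ((k:ℕ)+1) := (dyadIdx_spec h01).2
        have h1 : g t = t := hgA t htA
        have h2 : g t = t + (((π k : ℕ):ℝ) - ((k:ℕ):ℝ))/2^d := hg1 k t htk
        have h3 : ((π k : ℕ):ℝ) = ((k:ℕ):ℝ) := by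
          have := h1.symm.trans h2
          have h2d : (2:ℝ)^d ≠ 0 := ne_of_gt (two_pow_pos d)
          field_simp at this
          linarith
        have h4 : π k = k := Fin.ext (by exact_mod_cast h3)
        have h5 : π.symm k = k := π.symm_apply_eq.mpr h4.symm
        unfold dyadInv
        rw [dif_pos h01]
        rw [← hk, h5, hk]
        simp
      · exact dyadInv_outside d π h01
    · -- g ∘ inv = id
      funext t
      by_cases h01 : t ∈ Set.Ioc (0:ℝ) 1
      · set k : Fin (2^d) := ⟨dyadIdx d t, (dyadIdx_spec h01).1⟩ with hk
        have htk : t ∈ dyadI d ((k:ℕ)+1) := (dyadIdx_spec h01).2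
        have h1 : dyadInv d π t ∈ dyadI d ((π.symm k : ℕ)+1) :=
          permSpec_maps (dyadInv_spec d π) htk
        show g (dyadInv d π t) = t
        rw [hg1 (π.symm k) _ h1, dyadInv_spec d π k t htk, Equiv.apply_symm_apply]
        ring
      · show g (dyadInv d π t) = t
        rw [dyadInv_outside d π h01, hg0 t h01]
    · -- inv ∘ g = id
      funext t
      by_cases h01 : t ∈ Set.Ioc (0:ℝ) 1
      · set k : Fin (2^d) := ⟨dyadIdx d t, (dyadIdx_spec h01).1⟩ with hk
        have htk : t ∈ dyadI d ((k:ℕ)+1) := (dyadIdx_spec h01).2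
        have h1 : g t ∈ dyadI d ((π k : ℕ)+1) := permSpec_maps hg1 htk
        show dyadInv d π (g t) = t
        rw [dyadInv_spec d π (π k) _ h1, hg1 k t htk, Equiv.symm_apply_apply]
        ring
      · show dyadInv d π (g t) = t
        rw [hg0 t h01, dyadInv_outside d π h01]

/-- level-M indices whose interval is inside A -/

noncomputable def SM (A : Set ℝ) (M : ℕ) : Finset (Fin (2^M)) :=
  @Finset.filter _ (fun p => dyadI M ((p:ℕ)+1) ⊆ A) (Classical.decPred _) Finset.univ

lemma mem_SM {A : Set ℝ} {M : ℕ} {p : Fin (2^M)} :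
    p ∈ SM A M ↔ dyadI M ((p:ℕ)+1) ⊆ A := by
  classical
  simp [SM]

/-- `A` is the union of its level-`M` subintervals, `M ≥ N`. -/

lemma A_eq_biUnion (l m : Fin (2^N)) {M : ℕ} (hNM : N ≤ M) :
    dyadI N ((l:ℕ)+1) ∪ dyadI N ((m:ℕ)+1)
      = ⋃ p ∈ SM (dyadI N ((l:ℕ)+1) ∪ dyadI N ((m:ℕ)+1)) M, dyadI M ((p:ℕ)+1) := by
  set A := dyadI N ((l:ℕ)+1) ∪ dyadI N ((m:ℕ)+1) with hA
  apply Set.Subset.antisymm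
  · intro t ht
    have h01 : t ∈ Set.Ioc (0:ℝ) 1 := by
      rcases ht with h | h
      exacts [dyadI_subset_Ioc l h, dyadI_subset_Ioc m h]
    obtain ⟨hlt, hmem⟩ := dyadIdx_spec (d := M) h01
    set p : Fin (2^M) := ⟨dyadIdx M t, hlt⟩ with hp
    obtain ⟨e, rfl⟩ := Nat.exists_eq_add_of_le hNM
    have hparent : dyadI (N+e) ((p:ℕ)+1) ⊆ dyadI N ((p:ℕ)/2^e + 1) :=
      dyadI_subset_parent N e (p:ℕ)
    have hsub : dyadI (N+e) ((p:ℕ)+1) ⊆ A := by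
      rcases ht with h | h
      · have : (p:ℕ)/2^e = (l:ℕ) := dyadI_unique (hparent hmem) h
        rw [hA]; rw [this] at hparent
        exact hparent.trans Set.subset_union_left
      · have : (p:ℕ)/2^e = (m:ℕ) := dyadI_unique (hparent hmem) h
        rw [hA]; rw [this] at hparent
        exact hparent.trans Set.subset_union_right
    exact Set.mem_biUnion (mem_SM.mpr hsub) hmem
  · intro t ht
    obtain ⟨p, hp, hmem⟩ := Set.mem_iUnion₂.mp ht
    exact mem_SM.mp hp hmem

/-- the swap of two level-M intervals, as an element of `HH A`. -/

lemma swap_mem_HH {A : Set ℝ} {M : ℕ} {p q : Fin (2^M)} (hp : p ∈ SM A M)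
    (hq : q ∈ SM A M) : dyadInv M (Equiv.swap p q) ∈ HH A := by
  have hspec : PermSpec M (Equiv.swap p q) (dyadInv M (Equiv.swap p q)) := by
    have := dyadInv_spec M (Equiv.swap p q)
    rwa [Equiv.symm_swap] at this
  refine ⟨⟨fun t ht => dyadInv_outside _ _ ht, M, Equiv.swap p q,
    (permSpec_iff _ _ _).mpr hspec⟩, ?_⟩
  intro t htA
  by_cases h01 : t ∈ Set.Ioc (0:ℝ) 1
  · obtain ⟨hlt, hmem⟩ := dyadIdx_spec (d := M) h01
    set k : Fin (2^M) := ⟨dyadIdx M t, hlt⟩ with hk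
    have hkp : k ≠ p := fun h => htA (mem_SM.mp hp (h ▸ hmem))
    have hkq : k ≠ q := fun h => htA (mem_SM.mp hq (h ▸ hmem))
    have : Equiv.swap p q k = k := Equiv.swap_apply_of_ne_of_ne hkp hkq
    rw [hspec k t hmem, this]
    simp
  · exact dyadInv_outside _ _ h01

/-- measure transport along a swap. -/

lemma vol_swap {A B : Set ℝ} {M : ℕ} {p q : Fin (2^M)} (hp : p ∈ SM A M) (hq : q ∈ SM A M)
    (hBinv : ∀ g ∈ HH A, g ⁻¹' B = B) :
    volume (B ∩ dyadI M ((p:ℕ)+1)) = volume (B ∩ dyadI M ((q:ℕ)+1)) := by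
  by_cases hpq : p = q
  · rw [hpq]
  have hspec : PermSpec M (Equiv.swap p q) (dyadInv M (Equiv.swap p q)) := by
    have := dyadInv_spec M (Equiv.swap p q)
    rwa [Equiv.symm_swap] at this
  have hinv := hBinv _ (swap_mem_HH hp hq)
  set g := dyadInv M (Equiv.swap p q)
  set c : ℝ := (((p:ℕ):ℝ) - ((q:ℕ):ℝ))/2^M with hc
  have key : B ∩ dyadI M ((q:ℕ)+1) = (fun x => c + x) ⁻¹' (B ∩ dyadI M ((p:ℕ)+1)) := by
    ext t
    simp only [Set.mem_preimage, Set.mem_inter_iff]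
    constructor
    · rintro ⟨htB, htq⟩
      have hg : g t = t + c := by
        rw [hspec q t htq, Equiv.swap_apply_right]
      have hgmem : g t ∈ dyadI M ((Equiv.swap p q q : ℕ)+1) := permSpec_maps hspec htq
      rw [Equiv.swap_apply_right] at hgmem
      have : g t ∈ B := by rw [← hinv] at htB; exact htB
      rw [hg] at this hgmem
      rw [add_comm t c] at this hgmem
      exact ⟨this, hgmem⟩
    · rintro ⟨htB, htp⟩
      have htq : t ∈ dyadI M ((q:ℕ)+1) := by
        rw [mem_dyadI] at htp ⊢
        have h2 : ((p:ℕ):ℝ)/2^M = ((q:ℕ):ℝ)/2^M + c := by rw [hc]; ring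
        have h3 : (((p:ℕ):ℝ)+1)/2^M = (((q:ℕ):ℝ)+1)/2^M + c := by rw [hc]; ring
        constructor
        · have := htp.1
          linarith
        · have := htp.2
          linarith
      have hg : g t = t + c := by rw [hspec q t htq, Equiv.swap_apply_right]
      refine ⟨?_, htq⟩
      rw [← hinv]
      show g t ∈ B
      rw [hg, add_comm]
      exact htB
  rw [key, measure_preimage_add]

def p0e (l : Fin (2^N)) (e : ℕ) : Fin (2^(N+e)) :=
  ⟨(l:ℕ) * 2^e, by
    have h2e : 0 < 2^e := by positivity
    calc (l:ℕ) * 2^e < 2^N * 2^e := (Nat.mul_lt_mul_right h2e).mpr l.2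
    _ = 2^(N+e) := (pow_add 2 N e).symm⟩

lemma p0e_mem {A : Set ℝ} {l : Fin (2^N)} (hl : dyadI N ((l:ℕ)+1) ⊆ A) (e : ℕ) :
    p0e l e ∈ SM A (N+e) := by
  rw [mem_SM]
  have h2e : 0 < 2^e := by positivity
  have := dyadI_subset_parent N e ((l:ℕ) * 2^e)
  rw [Nat.mul_div_cancel _ h2e] at this
  exact (this.trans hl)

lemma sandwich_le (N : ℕ) (F G : ℝ → ℝ≥0∞)
    (hFmono : Monotone F)
    (hGlip : ∀ x y : ℝ, x ≤ y → G y ≤ G x + ENNReal.ofReal (y - x))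
    (heq : ∀ e a : ℕ, F ((a:ℝ)/2^(N+e)) = G ((a:ℝ)/2^(N+e)))
    (x : ℝ) (hx : 0 < x) : F x ≤ G x := by
  apply ENNReal.le_of_forall_pos_le_add
  intro ε hε _
  have hε' : (0:ℝ) < (ε:ℝ) := by exact_mod_cast hε
  obtain ⟨n, hn⟩ := exists_pow_lt_of_lt_one hε' (by norm_num : (1:ℝ)/2 < 1)
  set M := N + n with hM
  set a : ℕ := (⌈x * 2^M⌉).toNat with ha
  have hpos : (0:ℝ) < x * 2^M := by positivity
  have hca : (0:ℤ) ≤ ⌈x * 2^M⌉ := le_of_lt (Int.ceil_pos.mpr hpos)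
  have h2 : (a:ℝ) = ((⌈x*2^M⌉:ℤ):ℝ) := by
    rw [ha]
    exact_mod_cast congrArg (Int.cast : ℤ → ℝ) (Int.toNat_of_nonneg hca)
  have hax : x ≤ (a:ℝ)/2^M := by
    rw [le_div_iff₀ (two_pow_pos M), h2]
    exact Int.le_ceil _
  have hub : (a:ℝ)/2^M ≤ x + 1/2^M := by
    rw [div_le_iff₀ (two_pow_pos M), h2]
    have h1 : ((⌈x*2^M⌉:ℤ):ℝ) < x*2^M + 1 := Int.ceil_lt_add_one _
    have h3 : (x + 1/2^M) * 2^M = x * 2^M + 1 := by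
      field_simp
    linarith
  calc F x ≤ F ((a:ℝ)/2^M) := hFmono hax
    _ = G ((a:ℝ)/2^M) := heq n a
    _ ≤ G x + ENNReal.ofReal ((a:ℝ)/2^M - x) := hGlip x _ hax
    _ ≤ G x + ε := by
        apply add_le_add_right
        have h3 : (a:ℝ)/2^M - x ≤ (1:ℝ)/2^M := by linarith
        have h4 : (1:ℝ)/2^M ≤ (1/2:ℝ)^n := by
          rw [div_pow, one_pow]
          apply one_div_le_one_div_of_le (by positivity)
          apply pow_le_pow_right₀ (by norm_num)
          omega
        calc ENNReal.ofReal ((a:ℝ)/2^M - x) ≤ ENNReal.ofReal ((ε:ℝ)) := by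
              apply ENNReal.ofReal_le_ofReal
              linarith
          _ = (ε : ℝ≥0∞) := ENNReal.ofReal_coe_nnreal

theorem ergodic_dichotomy (l m : Fin (2^N))
    (B : Set ℝ) (hBmeas : MeasurableSet B)
    (hBA : B ⊆ dyadI N ((l:ℕ)+1) ∪ dyadI N ((m:ℕ)+1))
    (hBinv : ∀ g ∈ HH (dyadI N ((l:ℕ)+1) ∪ dyadI N ((m:ℕ)+1)), g ⁻¹' B = B) :
    volume B = 0 ∨ volume ((dyadI N ((l:ℕ)+1) ∪ dyadI N ((m:ℕ)+1)) \ B) = 0 := by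
  classical
  set A := dyadI N ((l:ℕ)+1) ∪ dyadI N ((m:ℕ)+1) with hA
  have hAmeas : MeasurableSet A := by
    rw [hA, dyadI_eq, dyadI_eq]
    exact (measurableSet_Ioc.union measurableSet_Ioc)
  have hA01 : A ⊆ Set.Ioc (0:ℝ) 1 := by
    rw [hA]
    exact Set.union_subset (dyadI_subset_Ioc l) (dyadI_subset_Ioc m)
  have hvolA_le : volume A ≤ 1 := by
    calc volume A ≤ volume (Set.Ioc (0:ℝ) 1) := measure_mono hA01
    _ = 1 := by rw [Real.volume_Ioc]; norm_num
  have hvolB_le : volume B ≤ 1 :=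
    le_trans (measure_mono hBA) hvolA_le
  have hvolA_ne : volume A ≠ ⊤ := (lt_of_le_of_lt hvolA_le ENNReal.one_lt_top).ne
  have hvolB_ne : volume B ≠ ⊤ := (lt_of_le_of_lt hvolB_le ENNReal.one_lt_top).ne
  set F : ℝ → ℝ≥0∞ := fun x => volume A * volume (B ∩ Set.Iic x) with hF
  set G : ℝ → ℝ≥0∞ := fun x => volume B * volume (A ∩ Set.Iic x) with hG
  -- the dyadic identity
  have heq : ∀ e a : ℕ, F ((a:ℝ)/2^(N+e)) = G ((a:ℝ)/2^(N+e)) := by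
    intro e a
    set M := N + e with hM
    set S := SM A M with hS
    have hcover : A = ⋃ p ∈ S, dyadI M ((p:ℕ)+1) := A_eq_biUnion l m (Nat.le_add_right N e)
    set v := volume (B ∩ dyadI M (((p0e l e : Fin (2^M)):ℕ)+1)) with hv
    set w := ENNReal.ofReal ((1:ℝ)/2^M) with hw
    have hp0 : p0e l e ∈ S := p0e_mem (by rw [hA]; exact Set.subset_union_left) e
    have hBconst : ∀ p ∈ S, volume (B ∩ dyadI M ((p:ℕ)+1)) = v := fun p hp =>
      vol_swap hp hp0 hBinv
    set T : ℕ → Finset (Fin (2^M)) := fun b => S.filter (fun p => (p:ℕ) < b) with hT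
    have hTmem : ∀ b (p : Fin (2^M)), p ∈ T b ↔ p ∈ S ∧ (p:ℕ) < b := by
      intro b p; rw [hT]; exact Finset.mem_filter
    have hIic : ∀ (C : Set ℝ), C ⊆ A → ∀ b : ℕ,
        C ∩ Set.Iic ((b:ℝ)/2^M) = ⋃ p ∈ T b, C ∩ dyadI M ((p:ℕ)+1) := by
      intro C hCA b
      ext t
      constructor
      · rintro ⟨htC, htb⟩
        have htA := hCA htC
        rw [hcover] at htA
        obtain ⟨p, hp, hmem⟩ := Set.mem_iUnion₂.mp htA
        have h1 : ((p:ℕ):ℝ)/2^M < ((b:ℕ):ℝ)/2^M := lt_of_lt_of_le (mem_dyadI.mp hmem).1 htb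
        have h2 : (p:ℕ) < b := by
          have := (div_lt_div_iff_of_pos_right (two_pow_pos M)).mp h1
          exact_mod_cast this
        exact Set.mem_biUnion ((hTmem b p).mpr ⟨hp, h2⟩) ⟨htC, hmem⟩
      · intro ht
        obtain ⟨p, hp, hm⟩ := Set.mem_iUnion₂.mp ht
        obtain ⟨htC, hmem⟩ := hm
        refine ⟨htC, ?_⟩
        have hpb : (p:ℕ) < b := ((hTmem b p).mp hp).2
        have : (((p:ℕ):ℝ)+1)/2^M ≤ ((b:ℕ):ℝ)/2^M := by
          have hnum : (((p:ℕ):ℝ)+1) ≤ ((b:ℕ):ℝ) := by exact_mod_cast hpb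
          gcongr
        exact le_trans (mem_dyadI.mp hmem).2 this
    have hsum : ∀ (C : Set ℝ), MeasurableSet C → ∀ (T : Finset (Fin (2^M))),
        volume (⋃ p ∈ T, C ∩ dyadI M ((p:ℕ)+1))
          = ∑ p ∈ T, volume (C ∩ dyadI M ((p:ℕ)+1)) := by
      intro C hC T
      apply measure_biUnion_finset
      · intro p _ q _ hpq
        refine Disjoint.mono Set.inter_subset_right Set.inter_subset_right ?_
        exact dyadI_disjoint (fun h => hpq (Fin.ext h))
      · intro p _
        exact hC.inter (by rw [dyadI_eq]; exact measurableSet_Ioc)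
    have hvolBi : ∀ b : ℕ, volume (B ∩ Set.Iic ((b:ℝ)/2^M)) = (T b).card • v := by
      intro b
      rw [hIic B hBA b, hsum B hBmeas (T b),
        Finset.sum_congr rfl (fun p hp => hBconst p ((hTmem b p).mp hp).1),
        Finset.sum_const]
    have hvolAi : ∀ b : ℕ, volume (A ∩ Set.Iic ((b:ℝ)/2^M)) = (T b).card • w := by
      intro b
      rw [hIic A subset_rfl b, hsum A hAmeas (T b)]
      rw [Finset.sum_congr rfl (fun p hp => ?_), Finset.sum_const]
      have hpS : p ∈ SM A M := by rw [← hS]; exact ((hTmem b p).mp hp).1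
      rw [Set.inter_eq_self_of_subset_right (mem_SM.mp hpS), volume_dyadI, hw]
    have hone : (((2^M:ℕ)):ℝ)/2^M = 1 := by
      rw [div_eq_one_iff_eq (ne_of_gt (two_pow_pos M))]
      push_cast
      ring
    have hTall : T (2^M) = S := by
      rw [hT]
      apply Finset.filter_true_of_mem
      intro p _
      exact p.2
    have hsub1 : ∀ C : Set ℝ, C ⊆ A → C ∩ Set.Iic (((2^M:ℕ):ℝ)/2^M) = C := by
      intro C hCA
      rw [hone]
      exact Set.inter_eq_self_of_subset_left (fun t ht => (hA01 (hCA ht)).2)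
    have hvolB : volume B = S.card • v := by
      have h := hvolBi (2^M)
      rw [hTall, hsub1 B hBA] at h
      exact h
    have hvolA : volume A = S.card • w := by
      have h := hvolAi (2^M)
      rw [hTall, hsub1 A subset_rfl] at h
      exact h
    show volume A * volume (B ∩ Set.Iic ((a:ℝ)/2^M)) = volume B * volume (A ∩ Set.Iic ((a:ℝ)/2^M))
    rw [hvolBi a, hvolAi a, hvolB, hvolA]
    simp only [nsmul_eq_mul]
    ring
  -- monotonicity and Lipschitz bounds
  have hmono : ∀ S C : Set ℝ, Monotone (fun x => volume S * volume (C ∩ Set.Iic x)) := by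
    intro S C x y hxy
    exact mul_le_mul_right
      (measure_mono (Set.inter_subset_inter_right _ (Set.Iic_subset_Iic.mpr hxy))) _
  have hlip : ∀ S C : Set ℝ, volume S ≤ 1 → ∀ x y : ℝ, x ≤ y →
      volume S * volume (C ∩ Set.Iic y)
        ≤ volume S * volume (C ∩ Set.Iic x) + ENNReal.ofReal (y - x) := by
    intro S C hS1 x y hxy
    have hsub : C ∩ Set.Iic y ⊆ (C ∩ Set.Iic x) ∪ Set.Ioc x y := by
      rintro t ⟨htC, hty⟩
      rcases le_or_gt t x with h | h
      · exact Or.inl ⟨htC, h⟩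
      · exact Or.inr ⟨h, hty⟩
    calc volume S * volume (C ∩ Set.Iic y)
        ≤ volume S * (volume (C ∩ Set.Iic x) + volume (Set.Ioc x y)) :=
          mul_le_mul_right (le_trans (measure_mono hsub) (measure_union_le _ _)) _
      _ = volume S * volume (C ∩ Set.Iic x) + volume S * volume (Set.Ioc x y) := mul_add _ _ _
      _ ≤ volume S * volume (C ∩ Set.Iic x) + 1 * ENNReal.ofReal (y - x) := by
          apply add_le_add_right
          rw [Real.volume_Ioc]
          exact mul_le_mul' hS1 le_rfl
      _ = volume S * volume (C ∩ Set.Iic x) + ENNReal.ofReal (y - x) := by rw [one_mul]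
  have hFG : ∀ x, F x = G x := by
    intro x
    rcases le_or_gt x 0 with hx | hx
    · have hBe : B ∩ Set.Iic x = ∅ := by
        apply Set.eq_empty_of_forall_notMem
        rintro t ⟨htB, htx⟩
        exact absurd (le_trans (Set.mem_Iic.mp htx) hx) (not_le.mpr (hA01 (hBA htB)).1)
      have hAe : A ∩ Set.Iic x = ∅ := by
        apply Set.eq_empty_of_forall_notMem
        rintro t ⟨htA, htx⟩
        exact absurd (le_trans (Set.mem_Iic.mp htx) hx) (not_le.mpr (hA01 htA).1)
      rw [hF, hG]
      simp [hBe, hAe]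
    · apply le_antisymm
      · exact sandwich_le N F G (hmono A B) (hlip B A hvolB_le) heq x hx
      · exact sandwich_le N G F (hmono B A) (hlip A B hvolA_le)
          (fun e a => (heq e a).symm) x hx
  -- measure extensionality
  set μ1 : Measure ℝ := volume A • volume.restrict B with hμ1
  set μ2 : Measure ℝ := volume B • volume.restrict A with hμ2
  haveI i1 : IsFiniteMeasure μ1 := by
    constructor
    rw [hμ1, Measure.smul_apply, Measure.restrict_apply_univ, smul_eq_mul]
    exact ENNReal.mul_lt_top (lt_of_le_of_lt hvolA_le ENNReal.one_lt_top)
      (lt_of_le_of_lt hvolB_le ENNReal.one_lt_top)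
  have hμ : μ1 = μ2 := by
    apply Measure.ext_of_Iic
    intro x
    rw [hμ1, hμ2, Measure.smul_apply, Measure.smul_apply,
      Measure.restrict_apply measurableSet_Iic, Measure.restrict_apply measurableSet_Iic,
      smul_eq_mul, smul_eq_mul, Set.inter_comm _ B, Set.inter_comm _ A]
    exact hFG x
  have hBB : volume A * volume B = volume B * volume B := by
    have h := congrArg (fun μ : Measure ℝ => μ B) hμ
    simp only [hμ1, hμ2, Measure.smul_apply, Measure.restrict_apply hBmeas,
      smul_eq_mul, Set.inter_self] at h
    rwa [Set.inter_eq_self_of_subset_left hBA] at h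
  by_cases h0 : volume B = 0
  · exact Or.inl h0
  · right
    have hAB : volume A = volume B := by
      rw [mul_comm (volume A)] at hBB
      have h := congrArg (fun z => (volume B)⁻¹ * z) hBB
      simpa [← mul_assoc, ENNReal.inv_mul_cancel h0 hvolB_ne, one_mul] using h
    rw [measure_diff hBA hBmeas.nullMeasurableSet hvolB_ne, hAB, tsub_self]

/-- every nonempty `E ∈ 𝒪((0,1])` is locally ergodic with respect to the group
`Perm^dyad_E` of dyadic permutations which are the identity on `E^c`. -/
theorem stmt12 (E : Set ℝ) (hE : IsDyadOpen E) (hne : E.Nonempty) :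
    LocallyErgodicDyad {g : ℝ → ℝ | IsDyadicPerm g ∧ ∀ t ∉ E, g t = t} E := by
  classical
  rcases hE with rfl | ⟨u, hu, hEu⟩
  · exact absurd hne (by simp)
  choose Nf kf hf using hu
  set Ej : ℕ → Set ℝ := fun j => ⋃ i ∈ Finset.range (j+1), u i with hEj
  have hEjmono : Monotone Ej := by
    intro a b hab
    intro t ht
    obtain ⟨i, hi, hti⟩ := Set.mem_iUnion₂.mp ht
    have : i < b + 1 := by have := Finset.mem_range.mp hi; omega
    exact Set.mem_biUnion (Finset.mem_range.mpr this) hti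
  have hEjE : ∀ j, Ej j ⊆ E := by
    intro j
    rw [hEu, hEj]
    intro t ht
    obtain ⟨i, _, hti⟩ := Set.mem_iUnion₂.mp ht
    exact Set.mem_iUnion.mpr ⟨i, hti⟩
  have hUnion : (⋃ j, Ej j) = E := by
    apply Set.Subset.antisymm
    · exact Set.iUnion_subset hEjE
    · rw [hEu]
      intro t ht
      obtain ⟨i, hti⟩ := Set.mem_iUnion.mp ht
      exact Set.mem_iUnion.mpr ⟨i, Set.mem_biUnion (Finset.self_mem_range_succ i) hti⟩
  refine ⟨Ej, hEjmono, ?_, hUnion⟩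
  intro j
  constructor
  · -- positive volume
    have hu0 : u 0 ⊆ Ej j := by
      intro t ht
      exact Set.mem_biUnion (Finset.mem_range.mpr (by omega)) ht
    calc (0:ℝ≥0∞) < ENNReal.ofReal ((1:ℝ)/2^(Nf 0)) := by
          rw [ENNReal.ofReal_pos]; positivity
      _ = volume (u 0) := by rw [hf 0, volume_dyadI]
      _ ≤ volume (Ej j) := measure_mono hu0
  · set NE := (Finset.range (j+1)).sup Nf with hNE
    refine ⟨NE, ⟨Finset.univ.filter (fun q : Fin (2^NE) => dyadI NE ((q:ℕ)+1) ⊆ Ej j), ?_⟩, ?_⟩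
    · -- finset representation
      apply Set.Subset.antisymm
      · intro t ht
        have htE := ht
        obtain ⟨i, hij, hti⟩ := Set.mem_iUnion₂.mp ht
        rw [hf i] at hti
        have h01 : t ∈ Set.Ioc (0:ℝ) 1 := dyadI_subset_Ioc (kf i) hti
        obtain ⟨hlt, hmem⟩ := dyadIdx_spec (d := NE) h01
        set q : Fin (2^NE) := ⟨dyadIdx NE t, hlt⟩ with hq
        have hNi : Nf i ≤ NE := Finset.le_sup hij
        obtain ⟨e, he⟩ := Nat.exists_eq_add_of_le hNi
        have hqmem : t ∈ dyadI NE ((q:ℕ)+1) := hmem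
        set qn := dyadIdx NE t with hqn
        have hqmem' : t ∈ dyadI (Nf i + e) (qn + 1) := by
          rw [← he]; exact hmem
        have hsub : dyadI NE ((q:ℕ)+1) ⊆ u i := by
          have hparent := dyadI_subset_parent (Nf i) e qn
          have huniq : qn/2^e = ((kf i : Fin (2^(Nf i))):ℕ) :=
            dyadI_unique (hparent hqmem') hti
          show dyadI NE (qn + 1) ⊆ u i
          rw [hf i, ← huniq, he]
          exact hparent
        have hqs : q ∈ Finset.univ.filter (fun q : Fin (2^NE) => dyadI NE ((q:ℕ)+1) ⊆ Ej j) := by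
          rw [Finset.mem_filter]
          refine ⟨Finset.mem_univ _, hsub.trans ?_⟩
          intro x hx
          exact Set.mem_biUnion hij hx
        exact Set.mem_biUnion hqs hqmem
      · intro t ht
        obtain ⟨q, hq, htq⟩ := Set.mem_iUnion₂.mp ht
        exact (Finset.mem_filter.mp hq).2 htq
    · -- the ergodicity part
      intro N _ l m _ hA
      refine ⟨HH (dyadI N ((l:ℕ)+1) ∪ dyadI N ((m:ℕ)+1)), ?_, HH_group _, ?_, ?_⟩
      · rintro g ⟨hg1, hg2⟩
        exact ⟨hg1, fun t ht => hg2 t (fun hmem => ht (hEjE j (hA hmem)))⟩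
      · exact fun g hg t ht => hg.2 t ht
      · exact fun B hB1 hB2 hB3 => ergodic_dichotomy l m B hB1 hB2 hB3
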